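/- Let m ≥ 3, let (𝒢, β) be a fractional partition of [m], and let A₁,…,A_m be compact sets in ℝⁿ such that for every S ∈ 𝒢 the Minkowski sum ∑_{i∈S} A_i is convex. Then ∑_{i∈[m]} A_i is convex. -/

import Mathlib

open MeasureTheory Pointwise

/-- `(𝒢, β)` is a fractional partition of `[m]` (indices `Fin m`). -/
def IsFractionalPartition (m : ℕ) (G : Finset (Finset (Fin m)))
    (β : Finset (Fin m) → ℝ) : Prop :=
  (∀ S ∈ G, S.Nonempty) ∧ (∀ S ∈ G, 0 ≤ β S ∧ β S ≤ 1) ∧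
    ∀ i : Fin m, ∑ S ∈ G.filter (fun S => i ∈ S), β S = 1

lemma sum_sets_mono {ι E : Type*} [AddCommGroup E] [Module ℝ E] (s : Finset ι)
    (f g : ι → Set E) (h : ∀ i ∈ s, f i ⊆ g i) :
    (∑ i ∈ s, f i) ⊆ ∑ i ∈ s, g i := by
  classical
  induction s using Finset.induction_on with
  | empty => simp
  | insert _ _ hx ih =>
    rw [Finset.sum_insert hx, Finset.sum_insert hx]
    exact Set.add_subset_add (h _ (Finset.mem_insert_self _ _))
      (ih fun i hi => h i (Finset.mem_insert_of_mem hi))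

lemma key_step {m : ℕ} {E : Type*} [AddCommGroup E] [Module ℝ E]
    (A : Fin m → Set E) (G : Finset (Finset (Fin m)))
    (hs : ∀ S ∈ G, (∑ i ∈ S, convexHull ℝ (A i)) ⊆ ∑ i ∈ S, A i) :
    (∑ i ∈ G.sup id, convexHull ℝ (A i)) + ∑ i ∈ Finset.univ \ G.sup id, A i
      ⊆ ∑ i : Fin m, A i := by
  classical
  induction G using Finset.induction_on with
  | empty =>
    simp only [Finset.sup_empty, Finset.bot_eq_empty, Finset.sum_empty,
      Finset.sdiff_empty, zero_add]
    exact subset_rfl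
  | @insert S G hS ih =>
    have hsS : (∑ i ∈ S, convexHull ℝ (A i)) ⊆ ∑ i ∈ S, A i :=
      hs S (Finset.mem_insert_self _ _)
    have ih' := ih fun T hT => hs T (Finset.mem_insert_of_mem hT)
    set U := G.sup id with hU
    have hsup : (insert S G).sup id = S ∪ U := by
      rw [Finset.sup_insert]
      rfl
    rw [hsup]
    -- split S ∪ U = S ∪ (U \ S), disjoint
    have h1 : S ∪ U = S ∪ (U \ S) := by
      ext j; by_cases h : j ∈ S <;> simp [h]
    have hd1 : Disjoint S (U \ S) := Finset.disjoint_sdiff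
    have e1 : (∑ i ∈ S ∪ U, convexHull ℝ (A i))
        = (∑ i ∈ S, convexHull ℝ (A i)) + ∑ i ∈ U \ S, convexHull ℝ (A i) := by
      rw [h1, Finset.sum_union hd1]
    -- split S = (S ∩ U) ∪ (S \ U), disjoint
    have h2 : S = (S ∩ U) ∪ (S \ U) := by
      ext j; simp [Finset.mem_union, Finset.mem_sdiff, Finset.mem_inter]; tauto
    have hd2 : Disjoint (S ∩ U) (S \ U) := by
      apply Finset.disjoint_left.mpr
      intro j hj hj'
      exact (Finset.mem_sdiff.mp hj').2 (Finset.mem_inter.mp hj).2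
    -- U = (S ∩ U) ∪ (U \ S), disjoint
    have h3 : U = (S ∩ U) ∪ (U \ S) := by
      ext j; simp [Finset.mem_union, Finset.mem_sdiff, Finset.mem_inter]; tauto
    have hd3 : Disjoint (S ∩ U) (U \ S) := by
      apply Finset.disjoint_left.mpr
      intro j hj hj'
      exact (Finset.mem_sdiff.mp hj').2 (Finset.mem_inter.mp hj).1
    -- univ \ U = (S \ U) ∪ (univ \ (S ∪ U)), disjoint
    have h4 : Finset.univ \ U = (S \ U) ∪ (Finset.univ \ (S ∪ U)) := by
      ext j; simp [Finset.mem_union, Finset.mem_sdiff]; tauto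
    have hd4 : Disjoint (S \ U) (Finset.univ \ (S ∪ U)) := by
      apply Finset.disjoint_left.mpr
      intro j hj hj'
      exact (Finset.mem_sdiff.mp hj').2 (Finset.mem_union_left _ (Finset.mem_sdiff.mp hj).1)
    calc (∑ i ∈ S ∪ U, convexHull ℝ (A i)) + ∑ i ∈ Finset.univ \ (S ∪ U), A i
        = ((∑ i ∈ S, convexHull ℝ (A i)) + ∑ i ∈ U \ S, convexHull ℝ (A i))
            + ∑ i ∈ Finset.univ \ (S ∪ U), A i := by rw [e1]
      _ ⊆ ((∑ i ∈ S, A i) + ∑ i ∈ U \ S, convexHull ℝ (A i))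
            + ∑ i ∈ Finset.univ \ (S ∪ U), A i :=
          Set.add_subset_add (Set.add_subset_add hsS subset_rfl) subset_rfl
      _ ⊆ (((∑ i ∈ S ∩ U, convexHull ℝ (A i)) + ∑ i ∈ S \ U, A i)
            + ∑ i ∈ U \ S, convexHull ℝ (A i))
            + ∑ i ∈ Finset.univ \ (S ∪ U), A i := by
          refine Set.add_subset_add (Set.add_subset_add ?_ subset_rfl) subset_rfl
          have e2 : (∑ i ∈ S, A i) = (∑ i ∈ S ∩ U, A i) + ∑ i ∈ S \ U, A i := by
            conv_lhs => rw [h2]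
            exact Finset.sum_union hd2
          rw [e2]
          exact Set.add_subset_add
            (sum_sets_mono _ _ _ fun i _ => subset_convexHull ℝ (A i)) subset_rfl
      _ = (∑ i ∈ U, convexHull ℝ (A i)) + ∑ i ∈ Finset.univ \ U, A i := by
          have e3 : (∑ i ∈ U, convexHull ℝ (A i))
              = (∑ i ∈ S ∩ U, convexHull ℝ (A i)) + ∑ i ∈ U \ S, convexHull ℝ (A i) := by
            conv_lhs => rw [h3]
            exact Finset.sum_union hd3
          have e4 : (∑ i ∈ Finset.univ \ U, A i)
              = (∑ i ∈ S \ U, A i) + ∑ i ∈ Finset.univ \ (S ∪ U), A i := by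
            rw [h4]
            exact Finset.sum_union hd4
          rw [e3, e4]
          abel
      _ ⊆ ∑ i : Fin m, A i := ih'

theorem convex_total_sum_of_convex_partial_sums (m n : ℕ) (hm : 3 ≤ m)
    (A : Fin m → Set (EuclideanSpace ℝ (Fin n)))
    (hc : ∀ i, IsCompact (A i))
    (G : Finset (Finset (Fin m))) (β : Finset (Fin m) → ℝ)
    (hfp : IsFractionalPartition m G β)
    (hconv : ∀ S ∈ G, Convex ℝ (∑ i ∈ S, A i)) :
    Convex ℝ (∑ i : Fin m, A i) := by
  classical
  -- G covers every index
  have hcover : ∀ i : Fin m, ∃ S ∈ G, i ∈ S := by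
    intro i
    by_contra h
    push_neg at h
    have : (G.filter (fun S => i ∈ S)) = ∅ := by
      apply Finset.filter_eq_empty_iff.mpr
      intro S hS
      exact h S hS
    have h1 := hfp.2.2 i
    rw [this, Finset.sum_empty] at h1
    norm_num at h1
  have hsup : G.sup id = Finset.univ := by
    apply Finset.eq_univ_iff_forall.mpr
    intro i
    obtain ⟨S, hS, hiS⟩ := hcover i
    exact Finset.le_sup (f := id) hS hiS
  have hs : ∀ S ∈ G, (∑ i ∈ S, convexHull ℝ (A i)) ⊆ ∑ i ∈ S, A i := by
    intro S hS
    rw [← convexHull_sum, (hconv S hS).convexHull_eq]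
  have hkey := key_step A G hs
  rw [hsup] at hkey
  simp only [Finset.sdiff_self, Finset.sum_empty, add_zero] at hkey
  have heq : (∑ i : Fin m, A i) = convexHull ℝ (∑ i : Fin m, A i) := by
    rw [convexHull_sum]
    exact subset_antisymm
      (sum_sets_mono _ _ _ fun i _ => subset_convexHull ℝ (A i)) hkey
  rw [heq]
  exact convex_convexHull ℝ _
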